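/- Let G be a finite group and H₁, …, H_k subgroups of G such that G = H₁ ∪ ⋯ ∪ H_k and H_i ∩ H_j = {1} for all i ≠ j. Then in the rational group ring ℚ[G], |G|·ε_G + (k−1)·ε_{1} = Σᵢ |Hᵢ|·ε_{Hᵢ}, where ε_H = |H|⁻¹ Σ_{h∈H} h is the idempotent attached to a subgroup H. -/

import Mathlib

open scoped Classical

/-- The idempotent `ε_H = |H|⁻¹ ∑_{h ∈ H} h` attached to a subgroup `H` in `ℚ[G]`. -/
noncomputable def subgroupIdempotent {G : Type*} [Group G] [Fintype G]
    (H : Subgroup G) : MonoidAlgebra ℚ G :=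
  (Nat.card H : ℚ)⁻¹ • ∑ h : H, MonoidAlgebra.single (h : G) (1 : ℚ)

lemma card_smul_subgroupIdempotent {G : Type*} [Group G] [Fintype G] (H : Subgroup G) :
    (Nat.card H : ℚ) • subgroupIdempotent H
      = ∑ h : H, MonoidAlgebra.single (h : G) (1 : ℚ) := by
  have h0 : (Nat.card H : ℚ) ≠ 0 := by
    exact_mod_cast Nat.card_pos.ne'
  rw [subgroupIdempotent, smul_smul, mul_inv_cancel₀ h0, one_smul]

lemma sum_single_apply {G : Type*} [Group G] [Fintype G] (H : Subgroup G) (a : G) :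
    (∑ h : H, MonoidAlgebra.single (h : G) (1 : ℚ)).coeff a
      = if a ∈ H then 1 else 0 := by
  classical
  rw [MonoidAlgebra.coeff_sum, Finsupp.finset_sum_apply]
  simp only [MonoidAlgebra.coeff_single, Finsupp.single_apply]
  by_cases ha : a ∈ H
  · rw [if_pos ha, Finset.sum_eq_single (⟨a, ha⟩ : H)]
    · simp
    · intro b _ hb
      simp only [ite_eq_right_iff]
      intro hba
      exact absurd (Subtype.ext hba) hb
    · simp
  · rw [if_neg ha, Finset.sum_eq_zero]
    intro b _
    rw [if_neg]
    rintro rfl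
    exact ha b.2

theorem partition_idempotent_relation {G : Type*} [Group G] [Fintype G]
    (k : ℕ) (Hs : Fin k → Subgroup G)
    (hcover : ∀ g : G, ∃ i, g ∈ Hs i)
    (hdisj : ∀ i j, i ≠ j → Hs i ⊓ Hs j = ⊥) :
    (Nat.card G : ℚ) • subgroupIdempotent (⊤ : Subgroup G)
        + ((k : ℚ) - 1) • subgroupIdempotent (⊥ : Subgroup G)
      = ∑ i : Fin k, (Nat.card (Hs i) : ℚ) • subgroupIdempotent (Hs i) := by
  classical
  have htop : (Nat.card G : ℚ) = (Nat.card (⊤ : Subgroup G) : ℚ) := by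
    exact_mod_cast congrArg Nat.cast (Nat.card_congr Subgroup.topEquiv.toEquiv).symm
  have hbotcard : (Nat.card (⊥ : Subgroup G) : ℚ) = 1 := by
    simp
  have hbot : subgroupIdempotent (⊥ : Subgroup G)
      = MonoidAlgebra.single (1 : G) (1 : ℚ) := by
    simp [subgroupIdempotent]
    rfl
  refine MonoidAlgebra.ext (Finsupp.ext fun a => ?_)
  rw [htop, card_smul_subgroupIdempotent, hbot]
  have hrhs : ∀ i : Fin k, (Nat.card (Hs i) : ℚ) • subgroupIdempotent (Hs i)
      = ∑ h : Hs i, MonoidAlgebra.single (h : G) (1 : ℚ) :=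
    fun i => card_smul_subgroupIdempotent _
  simp only [hrhs]
  rw [MonoidAlgebra.coeff_add, Finsupp.add_apply, sum_single_apply, MonoidAlgebra.coeff_smul, Finsupp.smul_apply, MonoidAlgebra.coeff_single, Finsupp.single_apply,
    MonoidAlgebra.coeff_sum, Finsupp.finset_sum_apply]
  rw [Finset.sum_congr rfl (fun i _ => sum_single_apply (Hs i) a)]
  by_cases ha : a = 1
  · subst ha
    rw [if_pos (Subgroup.mem_top 1), if_pos rfl, smul_eq_mul, mul_one,
      Finset.sum_congr rfl fun i _ => if_pos (Hs i).one_mem, Finset.sum_const,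
      Finset.card_univ, Fintype.card_fin, nsmul_eq_mul, mul_one]
    ring
  · obtain ⟨i₀, hi₀⟩ := hcover a
    rw [if_pos (Subgroup.mem_top a), if_neg (fun h => ha h.symm), smul_zero, add_zero]
    rw [Finset.sum_eq_single i₀]
    · rw [if_pos hi₀]
    · intro j _ hj
      rw [if_neg]
      intro haj
      have : a ∈ Hs j ⊓ Hs i₀ := ⟨haj, hi₀⟩
      rw [hdisj j i₀ hj] at this
      exact ha this
    · simp
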